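/- arXiv:1908.04652 — 4 statements merged into one kernel-verified Lean document; each statement's English description precedes it below -/
import Mathlib

section
/- Let H be a real Hilbert space, S : H → H a bounded linear operator with Hilbert-space adjoint S*, K ⊆ H a nonempty closed convex set, α > 0, σ > 0, and g ∈ H. Suppose u⁺, z⁺, z⁰, λ⁰, δ, u*, z*, λ* ∈ H satisfy: (i) S*(S u⁺ − g) + α u⁺ + λ⁰ + σ(u⁺ − z⁰) = δ; (ii) z⁺ ∈ K and ⟨λ⁰ + σ(u⁺ − z⁺), w − z⁺⟩ ≤ 0 for all w ∈ K; (iii) S*(S u* − g) + α u* + λ* = 0, u* = z* ∈ K, and ⟨λ*, w − z*⟩ ≤ 0 for all w ∈ K. Then, with r := u⁺ − z⁺, one has ⟨δ, u⁺ − u*⟩ − ⟨λ⁰ + σ r − λ*, r⟩ − σ⟨z⁺ − z⁰, u⁺ − u*⟩ ≥ α‖u⁺ − u*‖². -/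
/-- The central inequality (3.26): from the optimality conditions of one inexact ADMM
step with residual `δ` and the KKT system of the reduced problem, with `r = u⁺ − z⁺`,
`⟨δ, u⁺ − u*⟩ − ⟨λ⁰ + σr − λ*, r⟩ − σ⟨z⁺ − z⁰, u⁺ − u*⟩ ≥ α‖u⁺ − u*‖²`. -/
theorem stmt_9 {H : Type*} [NormedAddCommGroup H] [InnerProductSpace ℝ H] [CompleteSpace H]
    (S : H →L[ℝ] H)
    (K : Set H) (hKne : K.Nonempty) (hKcl : IsClosed K) (hKconv : Convex ℝ K)
    (α σ : ℝ) (hα : 0 < α) (hσ : 0 < σ) (g : H)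
    (up zp z0 lam0 δ ustar zstar lamstar : H)
    (h1 : (ContinuousLinearMap.adjoint S) (S up - g) + α • up + lam0 + σ • (up - z0) = δ)
    (h2 : zp ∈ K)
    (h2' : ∀ w ∈ K, (inner ℝ (lam0 + σ • (up - zp)) (w - zp) : ℝ) ≤ 0)
    (h3 : (ContinuousLinearMap.adjoint S) (S ustar - g) + α • ustar + lamstar = 0)
    (h4 : ustar = zstar) (h5 : zstar ∈ K)
    (h6 : ∀ w ∈ K, (inner ℝ lamstar (w - zstar) : ℝ) ≤ 0)
    (r : H) (hr : r = up - zp) :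
    α * ‖up - ustar‖ ^ 2 ≤
      (inner ℝ δ (up - ustar) : ℝ) - (inner ℝ (lam0 + σ • r - lamstar) r : ℝ)
        - σ * (inner ℝ (zp - z0) (up - ustar) : ℝ) := by
  subst hr h4
  set L := lam0 + σ • (up - zp) - lamstar with hL
  set d := up - ustar with hd
  have hA : (inner ℝ (lam0 + σ • (up - zp)) (ustar - zp) : ℝ) ≤ 0 := h2' _ h5
  have hB : (inner ℝ lamstar (zp - ustar) : ℝ) ≤ 0 := h6 _ h2
  have hkey : 0 ≤ ‖S d‖ ^ 2 + (inner ℝ L (zp - ustar) : ℝ) := by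
    have hA' : 0 ≤ (inner ℝ (lam0 + σ • (up - zp)) (zp - ustar) : ℝ) := by
      have : zp - ustar = -(ustar - zp) := by abel
      rw [this, inner_neg_right]; linarith
    rw [hL, inner_sub_left]
    nlinarith [sq_nonneg ‖S d‖]
  have hm : (ContinuousLinearMap.adjoint S) (S d) =
      (ContinuousLinearMap.adjoint S) (S up - g) -
        (ContinuousLinearMap.adjoint S) (S ustar - g) := by
    rw [← map_sub]; congr 1; rw [hd, map_sub]; abel
  have heq : (ContinuousLinearMap.adjoint S) (S d) + α • d + (lam0 - lamstar)
      + σ • (up - z0) = δ := by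
    rw [hm, hd]
    rw [← h1, ← sub_zero ((ContinuousLinearMap.adjoint S) (S up - g) + α • up + lam0 + σ • (up - z0)), ← h3]
    module
  have hid : (inner ℝ δ d : ℝ) = ‖S d‖ ^ 2 + α * ‖d‖ ^ 2 + inner ℝ (lam0 - lamstar) d
      + σ * inner ℝ (up - z0) d := by
    rw [← heq]
    simp only [inner_add_left, real_inner_smul_left, ContinuousLinearMap.adjoint_inner_left,
      real_inner_self_eq_norm_sq]
  have h₁ : (inner ℝ L d : ℝ) = inner ℝ L (up - zp) + inner ℝ L (zp - ustar) := by
    rw [← inner_add_right]; congr 1; rw [hd]; abel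
  have h₂ : (inner ℝ L d : ℝ) = inner ℝ (lam0 - lamstar) d + σ * inner ℝ (up - zp) d := by
    rw [hL]
    simp only [inner_sub_left, inner_add_left, real_inner_smul_left]
    ring
  have h₃ : (inner ℝ (up - z0) d : ℝ) - inner ℝ (zp - z0) d = inner ℝ (up - zp) d := by
    rw [← inner_sub_left]; congr 1; abel
  have h₃' : σ * (inner ℝ (up - z0) d : ℝ) - σ * inner ℝ (zp - z0) d
      = σ * inner ℝ (up - zp) d := by linear_combination σ * h₃
  linarith
end

section
/- Let H be a real Hilbert space, S : H → H a bounded linear operator with Hilbert-space adjoint S*, K ⊆ H a nonempty closed convex set, α > 0, σ > 0, τ > 0, and g ∈ H. Suppose u⁺, z⁺, z⁰, λ⁰, δ, u*, z*, λ* ∈ H satisfy: (i) S*(S u⁺ − g) + α u⁺ + λ⁰ + σ(u⁺ − z⁰) = δ; (ii) z⁺ ∈ K and ⟨λ⁰ + σ(u⁺ − z⁺), w − z⁺⟩ ≤ 0 for all w ∈ K; (iii) S*(S u* − g) + α u* + λ* = 0, u* = z* ∈ K, and ⟨λ*, w − z*⟩ ≤ 0 for all w ∈ K. Define λ⁺ :=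 λ⁰ + τσ(u⁺ − z⁺). Then ⟨δ, u⁺ − u*⟩ + (1/(2τσ))‖λ* − λ⁰‖² + (σ/2)‖z* − z⁰‖² − (1/(2τσ))‖λ* − λ⁺‖² − (σ/2)‖z* − z⁺‖² ≥ α‖u⁺ − u*‖² + ((1 − τ)σ/2)‖u⁺ − z⁺‖² + (σ/2)‖u⁺ − z⁰‖². -/
set_option maxHeartbeats 1000000


/-- Proposition 3.5 (one abstract step of the inexact ADMM measured against a KKT point),
with the corrected coefficient `(1 − τ)`:
`⟨δ, u⁺ − u*⟩ + (1/(2τσ))‖λ* − λ⁰‖² + (σ/2)‖z* − z⁰‖² − (1/(2τσ))‖λ* − λ⁺‖²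
  − (σ/2)‖z* − z⁺‖² ≥ α‖u⁺ − u*‖² + ((1−τ)σ/2)‖u⁺ − z⁺‖² + (σ/2)‖u⁺ − z⁰‖²`. -/
theorem stmt_10 {H : Type*} [NormedAddCommGroup H] [InnerProductSpace ℝ H] [CompleteSpace H]
    (S : H →L[ℝ] H)
    (K : Set H) (hKne : K.Nonempty) (hKcl : IsClosed K) (hKconv : Convex ℝ K)
    (α σ τ : ℝ) (hα : 0 < α) (hσ : 0 < σ) (hτ : 0 < τ) (g : H)
    (up zp z0 lam0 δ ustar zstar lamstar : H)
    (h1 : (ContinuousLinearMap.adjoint S) (S up - g) + α • up + lam0 + σ • (up - z0) = δ)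
    (h2 : zp ∈ K)
    (h2' : ∀ w ∈ K, (inner ℝ (lam0 + σ • (up - zp)) (w - zp) : ℝ) ≤ 0)
    (h3 : (ContinuousLinearMap.adjoint S) (S ustar - g) + α • ustar + lamstar = 0)
    (h4 : ustar = zstar) (h5 : zstar ∈ K)
    (h6 : ∀ w ∈ K, (inner ℝ lamstar (w - zstar) : ℝ) ≤ 0)
    (lamp : H) (hlamp : lamp = lam0 + (τ * σ) • (up - zp)) :
    α * ‖up - ustar‖ ^ 2 + (1 - τ) * σ / 2 * ‖up - zp‖ ^ 2 + σ / 2 * ‖up - z0‖ ^ 2 ≤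
      (inner ℝ δ (up - ustar) : ℝ)
        + 1 / (2 * τ * σ) * ‖lamstar - lam0‖ ^ 2 + σ / 2 * ‖zstar - z0‖ ^ 2
        - 1 / (2 * τ * σ) * ‖lamstar - lamp‖ ^ 2 - σ / 2 * ‖zstar - zp‖ ^ 2 := by
  subst h4
  subst hlamp
  set e := up - ustar with he
  set r := up - zp with hr
  set p := zp - z0 with hp
  set q := ustar - zp with hq
  set a := lam0 - lamstar with ha
  clear_value e r p q a
  have hτ0 : τ ≠ 0 := hτ.ne'
  have hσ0 : σ ≠ 0 := hσ.ne'
  -- subtracted optimality system tested with e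
  have hsub : (ContinuousLinearMap.adjoint S) (S e) + α • e + a + σ • (up - z0) = δ := by
    have h13 : ((ContinuousLinearMap.adjoint S) (S up - g) + α • up + lam0 + σ • (up - z0))
        - ((ContinuousLinearMap.adjoint S) (S ustar - g) + α • ustar + lamstar) = δ := by
      rw [h1, h3, sub_zero]
    have hS : S e = (S up - g) - (S ustar - g) := by
      rw [he, map_sub]; abel
    rw [← h13, hS, map_sub, he, ha, smul_sub]
    abel
  have hδe : (inner ℝ δ e : ℝ)
      = ‖S e‖ ^ 2 + α * ‖e‖ ^ 2 + inner ℝ a e + σ * inner ℝ (up - z0) e := by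
    rw [← hsub, inner_add_left, inner_add_left, inner_add_left, real_inner_smul_left,
      real_inner_smul_left, ContinuousLinearMap.adjoint_inner_left,
      real_inner_self_eq_norm_sq, real_inner_self_eq_norm_sq]
  -- variational inequalities
  have hIz : (inner ℝ (lam0 + σ • r) q : ℝ) ≤ 0 := by
    have h' := h2' ustar h5
    rwa [← hq] at h'
  have hIl : (0 : ℝ) ≤ inner ℝ lamstar q := by
    have h' := h6 zp h2
    rw [hq, show ustar - zp = -(zp - ustar) by abel, inner_neg_right]
    linarith
  have hI : (inner ℝ a q : ℝ) + σ * inner ℝ r q ≤ 0 := by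
    have h1' : (inner ℝ lam0 q : ℝ) + σ * inner ℝ r q ≤ 0 := by
      rw [← real_inner_smul_left, ← inner_add_left]; exact hIz
    have ha' : (inner ℝ a q : ℝ) = inner ℝ lam0 q - inner ℝ lamstar q := by
      rw [ha, inner_sub_left]
    linarith
  -- algebraic expansions
  have eq1a : ‖lamstar - lam0‖ ^ 2 = ‖a‖ ^ 2 := by
    rw [show lamstar - lam0 = -a by rw [ha]; abel, norm_neg]
  have eq1b : ‖lamstar - (lam0 + (τ * σ) • r)‖ ^ 2
      = ‖a‖ ^ 2 + 2 * ((τ * σ) * inner ℝ a r) + (τ * σ) ^ 2 * ‖r‖ ^ 2 := by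
    rw [show lamstar - (lam0 + (τ * σ) • r) = -(a + (τ * σ) • r) by rw [ha]; abel,
      norm_neg, norm_add_sq_real, real_inner_smul_right, norm_smul, Real.norm_eq_abs,
      mul_pow, sq_abs]
  have eq1 : 1 / (2 * τ * σ) * ‖lamstar - lam0‖ ^ 2
      - 1 / (2 * τ * σ) * ‖lamstar - (lam0 + (τ * σ) • r)‖ ^ 2
      = -(inner ℝ a r) - τ * σ / 2 * ‖r‖ ^ 2 := by
    rw [eq1a, eq1b]
    field_simp
    ring
  have hz0 : ustar - z0 = q + p := by rw [hq, hp]; abel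
  have hup0 : up - z0 = r + p := by rw [hr, hp]; abel
  have eq2 : ‖ustar - z0‖ ^ 2 = ‖q‖ ^ 2 + 2 * inner ℝ q p + ‖p‖ ^ 2 := by
    rw [hz0, norm_add_sq_real]
  have eq3 : ‖up - z0‖ ^ 2 = ‖r‖ ^ 2 + 2 * inner ℝ r p + ‖p‖ ^ 2 := by
    rw [hup0, norm_add_sq_real]
  have her : e = r - q := by rw [he, hr, hq]; abel
  have eq4 : (inner ℝ a e : ℝ) = inner ℝ a r - inner ℝ a q := by rw [her, inner_sub_right]
  have eq5 : (inner ℝ (up - z0) e : ℝ) = ‖r‖ ^ 2 + inner ℝ p r - inner ℝ r q - inner ℝ p q := by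
    rw [hup0, her, inner_add_left, inner_sub_right, inner_sub_right,
      real_inner_self_eq_norm_sq]
    ring
  have hsym1 : (inner ℝ q p : ℝ) = inner ℝ p q := real_inner_comm _ _
  have hsym2 : (inner ℝ r p : ℝ) = inner ℝ p r := real_inner_comm _ _
  have eq2σ : σ * ‖ustar - z0‖ ^ 2 = σ * ‖q‖ ^ 2 + 2 * (σ * inner ℝ q p) + σ * ‖p‖ ^ 2 := by
    rw [eq2]; ring
  have eq3σ : σ * ‖up - z0‖ ^ 2 = σ * ‖r‖ ^ 2 + 2 * (σ * inner ℝ r p) + σ * ‖p‖ ^ 2 := by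
    rw [eq3]; ring
  have eq5σ : σ * (inner ℝ (up - z0) e : ℝ)
      = σ * ‖r‖ ^ 2 + σ * inner ℝ p r - σ * inner ℝ r q - σ * inner ℝ p q := by
    rw [eq5]; ring
  have hsym1σ : σ * (inner ℝ q p : ℝ) = σ * inner ℝ p q := by rw [hsym1]
  have hsym2σ : σ * (inner ℝ r p : ℝ) = σ * inner ℝ p r := by rw [hsym2]
  linarith [hδe, hI, eq1, eq2σ, eq3σ, eq4, eq5σ, hsym1σ, hsym2σ, sq_nonneg ‖S e‖]
end

section
/- Let H be a real Hilbert space, S : H → H a bounded linear operator with Hilbert-space adjoint S*, K ⊆ H a nonempty closed convex set, α > 0, σ > 0, τ > 0, and g ∈ H. Suppose ũ, z̃, z⁰, λ⁰, u*, z*, λ* ∈ H satisfy: (i) S*(S ũ − g) + α ũ + λ⁰ + σ(ũ − z⁰) = 0; (ii) z̃ ∈ K and ⟨λ⁰ + σ(ũ − z̃), w − z̃⟩ ≤ 0 for all w ∈ K; (iii) S*(S u* − g) + α u* + λ* = 0, u* = z* ∈ K, and ⟨λ*, w − z*⟩ ≤ 0 for all w ∈ K. Define λ̃ := λ⁰ +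 τσ(ũ − z̃). Then (1/(2τσ))‖λ* − λ⁰‖² + (σ/2)‖z* − z⁰‖² − (1/(2τσ))‖λ* − λ̃‖² − (σ/2)‖z* − z̃‖² ≥ α‖ũ − u*‖² + ((1 − τ)σ/2)‖ũ − z̃‖² + (σ/2)‖ũ − z⁰‖². -/
/-- Proposition 3.6 (one abstract step of the exact ADMM measured against a KKT point),
with the corrected coefficient `(1 − τ)`:
`(1/(2τσ))‖λ* − λ⁰‖² + (σ/2)‖z* − z⁰‖² − (1/(2τσ))‖λ* − λ̃‖² − (σ/2)‖z* − z̃‖²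
  ≥ α‖ũ − u*‖² + ((1−τ)σ/2)‖ũ − z̃‖² + (σ/2)‖ũ − z⁰‖²`. -/
theorem stmt_11 {H : Type*} [NormedAddCommGroup H] [InnerProductSpace ℝ H] [CompleteSpace H]
    (S : H →L[ℝ] H)
    (K : Set H) (hKne : K.Nonempty) (hKcl : IsClosed K) (hKconv : Convex ℝ K)
    (α σ τ : ℝ) (hα : 0 < α) (hσ : 0 < σ) (hτ : 0 < τ) (g : H)
    (ut zt z0 lam0 ustar zstar lamstar : H)
    (h1 : (ContinuousLinearMap.adjoint S) (S ut - g) + α • ut + lam0 + σ • (ut - z0) = 0)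
    (h2 : zt ∈ K)
    (h2' : ∀ w ∈ K, (inner ℝ (lam0 + σ • (ut - zt)) (w - zt) : ℝ) ≤ 0)
    (h3 : (ContinuousLinearMap.adjoint S) (S ustar - g) + α • ustar + lamstar = 0)
    (h4 : ustar = zstar) (h5 : zstar ∈ K)
    (h6 : ∀ w ∈ K, (inner ℝ lamstar (w - zstar) : ℝ) ≤ 0)
    (lamt : H) (hlamt : lamt = lam0 + (τ * σ) • (ut - zt)) :
    α * ‖ut - ustar‖ ^ 2 + (1 - τ) * σ / 2 * ‖ut - zt‖ ^ 2 + σ / 2 * ‖ut - z0‖ ^ 2 ≤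
      1 / (2 * τ * σ) * ‖lamstar - lam0‖ ^ 2 + σ / 2 * ‖zstar - z0‖ ^ 2
        - 1 / (2 * τ * σ) * ‖lamstar - lamt‖ ^ 2 - σ / 2 * ‖zstar - zt‖ ^ 2 := by
  subst hlamt h4
  -- difference of the two stationarity equations
  have hsub : (ContinuousLinearMap.adjoint S) (S (ut - ustar)) + α • (ut - ustar)
      + (lam0 - lamstar) + σ • (ut - z0) = 0 := by
    have e : ((ContinuousLinearMap.adjoint S) (S ut - g) + α • ut + lam0 + σ • (ut - z0))
        - ((ContinuousLinearMap.adjoint S) (S ustar - g) + α • ustar + lamstar) = 0 := by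
      rw [h1, h3]; simp
    rw [← e]
    simp only [map_sub, smul_sub]
    abel
  have key1 : α * ‖ut - ustar‖ ^ 2 + ‖S (ut - ustar)‖ ^ 2
      = (inner ℝ (lamstar - lam0 - σ • (ut - z0)) (ut - ustar) : ℝ) := by
    have e0 : (inner ℝ ((ContinuousLinearMap.adjoint S) (S (ut - ustar)) + α • (ut - ustar)
        + (lam0 - lamstar) + σ • (ut - z0)) (ut - ustar) : ℝ) = 0 := by
      rw [hsub]; simp
    rw [inner_add_left, inner_add_left, inner_add_left, ContinuousLinearMap.adjoint_inner_left,
      real_inner_self_eq_norm_sq, real_inner_smul_left, real_inner_self_eq_norm_sq] at e0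
    simp only [inner_sub_left, real_inner_smul_left] at e0 ⊢
    linarith
  have key2 : (inner ℝ (lam0 - lamstar + σ • (ut - zt)) (ustar - zt) : ℝ) ≤ 0 := by
    have a := h2' ustar h5
    have b := h6 zt h2
    have hb : (inner ℝ lamstar (zt - ustar) : ℝ) = - inner ℝ lamstar (ustar - zt) := by
      rw [← inner_neg_right]; congr 1; abel
    rw [hb] at b
    rw [inner_add_left, inner_sub_left] at *
    linarith
  have hS := sq_nonneg ‖S (ut - ustar)‖
  have key1' : α * ‖ut - ustar‖ ^ 2 ≤ (inner ℝ (lamstar - lam0 - σ • (ut - z0)) (ut - ustar) : ℝ) := by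
    linarith
  -- the algebraic identity
  have hid :
      (1 / (2 * τ * σ) * ‖lamstar - lam0‖ ^ 2 + σ / 2 * ‖ustar - z0‖ ^ 2
        - 1 / (2 * τ * σ) * ‖lamstar - (lam0 + (τ * σ) • (ut - zt))‖ ^ 2 - σ / 2 * ‖ustar - zt‖ ^ 2)
      - ((1 - τ) * σ / 2 * ‖ut - zt‖ ^ 2 + σ / 2 * ‖ut - z0‖ ^ 2)
      = (inner ℝ (lamstar - lam0 - σ • (ut - z0)) (ut - ustar) : ℝ)
        - (inner ℝ (lam0 - lamstar + σ • (ut - zt)) (ustar - zt) : ℝ) := by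
    have hts : τ * σ ≠ 0 := by positivity
    field_simp
    simp only [← real_inner_self_eq_norm_sq, inner_sub_left, inner_sub_right, inner_add_left,
      inner_add_right, real_inner_smul_left, real_inner_smul_right]
    ring_nf
    simp only [real_inner_comm zt ut, real_inner_comm z0 ut, real_inner_comm lam0 ut,
      real_inner_comm ustar ut, real_inner_comm lamstar ut,
      real_inner_comm z0 zt, real_inner_comm lam0 zt, real_inner_comm ustar zt,
      real_inner_comm lamstar zt,
      real_inner_comm lam0 z0, real_inner_comm ustar z0, real_inner_comm lamstar z0,
      real_inner_comm ustar lam0, real_inner_comm lamstar lam0,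
      real_inner_comm lamstar ustar]
    ring_nf
  linarith
end

section
/- Let H be a real Hilbert space, S : H → H a bounded linear operator with Hilbert-space adjoint S*, K ⊆ H a nonempty closed convex set, g ∈ H, α > 0, σ > 0, and τ ∈ (0, (1+√5)/2). Define ∇Ĵ(u) := S*(S u − g) + α u. Let (u*, z*, λ*) be a KKT point: ∇Ĵ(u*) + λ* = 0, u* = z* ∈ K, and ⟨λ*, w − z*⟩ ≤ 0 for all w ∈ K. Let z⁰ ∈ K, λ⁰ ∈ H, let (ε_k)_{k≥0} ⊆ [0, ∞) satisfy ∑_{k=0}^∞ ε_k < ∞, and let sequences (u^{k+1}, z^{k+1}, λ^{k+1})_{k≥0} in H satisfy, for every k ≥ 0: (i) ‖∇Ĵ(u^{k+1}) + λ^k + σ(u^{k+1} − z^k)‖ ≤ ε_k; (ii) z^{k+1} = Π_K(u^{k+1} + λ^k/σ); (iii) λ^{k+1} = λ^k + τσ(u^{k+1} − z^{k+1}). Then u^k → u*, z^k → z*, and λ^k → λ* strongly (in norm) in H as k → ∞. -/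
open Filter Topology RealInnerProductSpace

lemma aux_vi {H : Type*} [NormedAddCommGroup H] [InnerProductSpace ℝ H]
    {K : Set H} (hK : Convex ℝ K) {p y : H} (hy : y ∈ K)
    (hmin : ∀ w ∈ K, ‖p - y‖ ≤ ‖p - w‖) :
    ∀ w ∈ K, (inner ℝ (p - y) (w - y) : ℝ) ≤ 0 := by
  have : Nonempty K := ⟨⟨y, hy⟩⟩
  have hbdd : BddBelow (Set.range fun w : K => ‖p - (w : H)‖) :=
    ⟨0, by rintro x ⟨w, rfl⟩; exact norm_nonneg _⟩
  have h : ‖p - y‖ = ⨅ w : K, ‖p - (w : H)‖ :=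
    le_antisymm (le_ciInf fun w => hmin w w.2) (ciInf_le hbdd ⟨y, hy⟩)
  exact (norm_eq_iInf_iff_real_inner_le_zero hK hy).1 h

set_option maxHeartbeats 1000000 in
/-- Convergence of the inexact ADMM in function space (Theorem 3.1, convergence part):
under summable inexactness `∑ ε_k < ∞` and step length `τ ∈ (0, (1+√5)/2)`, the iterates
`(u^k, z^k, λ^k)` converge strongly to the KKT point `(u*, z*, λ*)`. -/
theorem stmt_14 {H : Type*} [NormedAddCommGroup H] [InnerProductSpace ℝ H] [CompleteSpace H]
    (S : H →L[ℝ] H)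
    (K : Set H) (hKne : K.Nonempty) (hKcl : IsClosed K) (hKconv : Convex ℝ K)
    (g : H) (α σ τ : ℝ) (hα : 0 < α) (hσ : 0 < σ)
    (hτ : 0 < τ ∧ τ < (1 + Real.sqrt 5) / 2)
    (gradJ : H → H)
    (hgrad : ∀ u : H, gradJ u = (ContinuousLinearMap.adjoint S) (S u - g) + α • u)
    (ustar zstar lamstar : H)
    (hkkt1 : gradJ ustar + lamstar = 0)
    (hkkt2 : ustar = zstar) (hkkt3 : zstar ∈ K)
    (hkkt4 : ∀ w ∈ K, (inner ℝ lamstar (w - zstar) : ℝ) ≤ 0)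
    (u z lam : ℕ → H) (hz0 : z 0 ∈ K)
    (ε : ℕ → ℝ) (hεpos : ∀ k, 0 ≤ ε k) (hεsum : Summable ε)
    (h1 : ∀ k : ℕ, ‖gradJ (u (k + 1)) + lam k + σ • (u (k + 1) - z k)‖ ≤ ε k)
    (h2 : ∀ k : ℕ, z (k + 1) ∈ K ∧ ∀ w ∈ K,
        ‖u (k + 1) + σ⁻¹ • lam k - z (k + 1)‖ ≤ ‖u (k + 1) + σ⁻¹ • lam k - w‖)
    (h3 : ∀ k : ℕ, lam (k + 1) = lam k + (τ * σ) • (u (k + 1) - z (k + 1))) :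
    Filter.Tendsto u Filter.atTop (nhds ustar) ∧
    Filter.Tendsto z Filter.atTop (nhds zstar) ∧
    Filter.Tendsto lam Filter.atTop (nhds lamstar) := by
  obtain ⟨hτ1, hτ2⟩ := hτ
  -- parameter facts
  have h5 : Real.sqrt 5 ^ 2 = 5 := Real.sq_sqrt (by norm_num)
  have h51 : 1 ≤ Real.sqrt 5 := by nlinarith [Real.sqrt_nonneg 5]
  have hτsq : τ ^ 2 - τ - 1 < 0 := by
    nlinarith [mul_pos (show (0:ℝ) < Real.sqrt 5 - (2*τ-1) by linarith)
      (show (0:ℝ) < Real.sqrt 5 + (2*τ-1) by linarith)]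
  have h2τ : 0 < 2 - τ := by nlinarith [sq_nonneg (τ - 1)]
  set s := Real.sqrt (2 - τ) with hsdef
  have hs2 : s ^ 2 = 2 - τ := Real.sq_sqrt h2τ.le
  have hs0 : 0 < s := Real.sqrt_pos.2 h2τ
  set q := |1 - τ| with hqdef
  have hq0 : 0 ≤ q := abs_nonneg _
  have hq2 : q ^ 2 = (1 - τ) ^ 2 := sq_abs _
  have hqs : q < s := by nlinarith
  -- KKT rewriting
  have hstar : gradJ ustar = -lamstar := eq_neg_of_add_eq_zero_left hkkt1
  -- strong monotonicity of the gradient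
  have hmono : ∀ a b : H, α * ‖a - b‖ ^ 2 ≤ ⟪gradJ a - gradJ b, a - b⟫ := by
    intro a b
    have hd : gradJ a - gradJ b
        = (ContinuousLinearMap.adjoint S) (S (a - b)) + α • (a - b) := by
      simp only [hgrad, map_sub, smul_sub]; abel
    rw [hd, inner_add_left, real_inner_smul_left, ContinuousLinearMap.adjoint_inner_left]
    simp only [real_inner_self_eq_norm_sq]
    nlinarith [sq_nonneg ‖S (a - b)‖]
  -- variational inequality for the z-update
  have hVI : ∀ k, ∀ w ∈ K, ⟪lam k + σ • (u (k+1) - z (k+1)), w - z (k+1)⟫ ≤ 0 := by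
    intro k w hw
    have h := aux_vi hKconv (h2 k).1 (h2 k).2 w hw
    have key : lam k + σ • (u (k+1) - z (k+1))
        = σ • (u (k+1) + σ⁻¹ • lam k - z (k+1)) := by
      conv_rhs => rw [smul_sub, smul_add, smul_smul, mul_inv_cancel₀ hσ.ne', one_smul]
      module
    rw [key, real_inner_smul_left]
    exact mul_nonpos_of_nonneg_of_nonpos hσ.le h
  -- base inequality
  have hA : ∀ j : ℕ, α * ‖u (j+1) - ustar‖ ^ 2
      + ⟪lam j - lamstar, u (j+1) - z (j+1)⟫
      + σ * ‖u (j+1) - z (j+1)‖ ^ 2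
      + σ * ⟪z (j+1) - z j, z (j+1) - zstar⟫
      + σ * ⟪z (j+1) - z j, u (j+1) - z (j+1)⟫
      ≤ ε j * ‖u (j+1) - ustar‖ := by
    intro j
    have hm := hmono (u (j+1)) ustar
    have e1 : u (j+1) - ustar = (z (j+1) - zstar) + (u (j+1) - z (j+1)) := by
      rw [hkkt2]; abel
    have hvec : gradJ (u (j+1)) + lam j + σ • (u (j+1) - z j)
        = (gradJ (u (j+1)) - gradJ ustar)
          + (lam j + σ • (u (j+1) - z (j+1)) - lamstar)
          + σ • (z (j+1) - z j) := by
      rw [hstar]; rw [smul_sub, smul_sub, smul_sub]; abel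
    have step1 : ⟪gradJ (u (j+1)) + lam j + σ • (u (j+1) - z j), u (j+1) - ustar⟫
        ≤ ε j * ‖u (j+1) - ustar‖ :=
      le_trans (real_inner_le_norm _ _)
        (mul_le_mul_of_nonneg_right (h1 j) (norm_nonneg _))
    have step2 : ⟪gradJ (u (j+1)) + lam j + σ • (u (j+1) - z j), u (j+1) - ustar⟫
        = ⟪gradJ (u (j+1)) - gradJ ustar, u (j+1) - ustar⟫
          + ⟪lam j + σ • (u (j+1) - z (j+1)) - lamstar, u (j+1) - ustar⟫
          + σ * ⟪z (j+1) - z j, u (j+1) - ustar⟫ := by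
      rw [hvec, inner_add_left, inner_add_left, real_inner_smul_left]
    have e2 : lam j + σ • (u (j+1) - z (j+1)) - lamstar
        = (lam j - lamstar) + σ • (u (j+1) - z (j+1)) := by abel
    have e3 : ⟪lam j + σ • (u (j+1) - z (j+1)) - lamstar, u (j+1) - z (j+1)⟫
        = ⟪lam j - lamstar, u (j+1) - z (j+1)⟫ + σ * ‖u (j+1) - z (j+1)‖ ^ 2 := by
      rw [e2, inner_add_left, real_inner_smul_left, real_inner_self_eq_norm_sq]
    have step3 : ⟪lam j + σ • (u (j+1) - z (j+1)) - lamstar, u (j+1) - ustar⟫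
        = ⟪lam j + σ • (u (j+1) - z (j+1)) - lamstar, z (j+1) - zstar⟫
          + ⟪lam j - lamstar, u (j+1) - z (j+1)⟫
          + σ * ‖u (j+1) - z (j+1)‖ ^ 2 := by
      rw [e1, inner_add_right, e3]; ring
    have step5 : ⟪z (j+1) - z j, u (j+1) - ustar⟫
        = ⟪z (j+1) - z j, z (j+1) - zstar⟫
          + ⟪z (j+1) - z j, u (j+1) - z (j+1)⟫ := by
      rw [e1, inner_add_right]
    have hVIz : 0 ≤ ⟪lam j + σ • (u (j+1) - z (j+1)) - lamstar, z (j+1) - zstar⟫ := by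
      have a1 := hVI j zstar hkkt3
      have a2 := hkkt4 (z (j+1)) (h2 j).1
      have e4 : zstar - z (j+1) = -(z (j+1) - zstar) := by abel
      rw [e4, inner_neg_right] at a1
      rw [inner_sub_left]
      linarith
    rw [step5] at step2
    linarith [step1, step2, step3, hm, hVIz]
  -- dual update identity
  have hI1 : ∀ j : ℕ, ‖lam (j+1) - lamstar‖ ^ 2 = ‖lam j - lamstar‖ ^ 2
      + 2*(τ*σ)*⟪lam j - lamstar, u (j+1) - z (j+1)⟫
      + (τ*σ)^2*‖u (j+1) - z (j+1)‖ ^ 2 := by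
    intro j
    have e : lam (j+1) - lamstar = (lam j - lamstar) + (τ*σ) • (u (j+1) - z (j+1)) := by
      rw [h3 j]; abel
    rw [e, norm_add_sq_real, real_inner_smul_right, norm_smul, Real.norm_eq_abs, mul_pow,
      sq_abs]
    ring
  -- primal difference identity
  have hI2 : ∀ j : ℕ, 2*⟪z (j+1) - z j, z (j+1) - zstar⟫
      = ‖z (j+1) - zstar‖ ^ 2 - ‖z j - zstar‖ ^ 2 + ‖z (j+1) - z j‖ ^ 2 := by
    intro j
    have t := norm_sub_sq_real (z (j+1) - zstar) (z (j+1) - z j)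
    have e : (z (j+1) - zstar) - (z (j+1) - z j) = z j - zstar := by abel
    rw [e] at t
    have c := real_inner_comm (z (j+1) - zstar) (z (j+1) - z j)
    linarith [t, c]
  -- quasi-monotonicity of successive projections
  have hI3 : ∀ k : ℕ, (1-τ) * σ * ⟪z (k+2) - z (k+1), u (k+1) - z (k+1)⟫
      ≤ σ * ⟪z (k+2) - z (k+1), u (k+2) - z (k+2)⟫ := by
    intro k
    have a1 := hVI (k+1) (z (k+1)) (h2 k).1
    have a2 := hVI k (z (k+2)) (h2 (k+1)).1
    simp only [show k+1+1 = k+2 from rfl] at a1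
    have e4 : z (k+1) - z (k+2) = -(z (k+2) - z (k+1)) := by abel
    rw [e4, inner_neg_right] at a1
    have hsub : (0:ℝ) ≤ ⟪(lam (k+1) + σ • (u (k+2) - z (k+2)))
        - (lam k + σ • (u (k+1) - z (k+1))), z (k+2) - z (k+1)⟫ := by
      rw [inner_sub_left]; linarith
    have e5 : (lam (k+1) + σ • (u (k+2) - z (k+2))) - (lam k + σ • (u (k+1) - z (k+1)))
        = σ • (u (k+2) - z (k+2)) - ((1-τ)*σ) • (u (k+1) - z (k+1)) := by
      rw [h3 k]; module
    rw [e5, inner_sub_left, real_inner_smul_left, real_inner_smul_left,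
      real_inner_comm (z (k+2) - z (k+1)) (u (k+2) - z (k+2)),
      real_inner_comm (z (k+2) - z (k+1)) (u (k+1) - z (k+1))] at hsub
    linarith
  -- Lyapunov functional
  set V : ℕ → ℝ := fun n => s*‖lam n - lamstar‖ ^ 2 + s*τ*σ^2*‖z n - zstar‖ ^ 2
      + q*s^2*τ*σ^2*‖u n - z n‖ ^ 2 with hVdef
  have hV0 : ∀ n, 0 ≤ V n := by
    intro n; simp only [hVdef]; positivity
  -- one-step descent estimate
  have hKey : ∀ k : ℕ, V (k+2) + s*τ*σ*α*‖u (k+2) - ustar‖ ^ 2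
      + s^2*(s-q)*τ*σ^2*‖u (k+2) - z (k+2)‖ ^ 2
      ≤ V (k+1) + (s*τ*σ/α)*(ε (k+1))^2 := by
    intro k
    have F1 := hA (k+1)
    have F2 := hI1 (k+1)
    have F3 := hI2 (k+1)
    have F4 := hI3 k
    simp only [show k+1+1 = k+2 from rfl] at F1 F2 F3
    have F5 : 2*s*|⟪z (k+2) - z (k+1), u (k+1) - z (k+1)⟫|
        ≤ ‖z (k+2) - z (k+1)‖ ^ 2 + s^2*‖u (k+1) - z (k+1)‖ ^ 2 := by
      have hcs := abs_real_inner_le_norm (z (k+2) - z (k+1)) (u (k+1) - z (k+1))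
      nlinarith [sq_nonneg (‖z (k+2) - z (k+1)‖ - s*‖u (k+1) - z (k+1)‖),
        mul_le_mul_of_nonneg_left hcs (by positivity : (0:ℝ) ≤ 2*s)]
    have habs : -(q * |⟪z (k+2) - z (k+1), u (k+1) - z (k+1)⟫|)
        ≤ (1-τ) * ⟪z (k+2) - z (k+1), u (k+1) - z (k+1)⟫ := by
      have h := neg_abs_le ((1-τ) * ⟪z (k+2) - z (k+1), u (k+1) - z (k+1)⟫)
      rw [abs_mul, ← hqdef] at h
      exact h
    have G1 := mul_le_mul_of_nonneg_left F1 (by positivity : (0:ℝ) ≤ 2*s*τ*σ)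
    have G2 : s * ‖lam (k+2) - lamstar‖ ^ 2 = s*‖lam (k+1) - lamstar‖ ^ 2
        + s*(2*(τ*σ)*⟪lam (k+1) - lamstar, u (k+2) - z (k+2)⟫)
        + s*((τ*σ)^2*‖u (k+2) - z (k+2)‖ ^ 2) := by rw [F2]; ring
    have G3 : s*τ*σ^2*(2*⟪z (k+2) - z (k+1), z (k+2) - zstar⟫)
        = s*τ*σ^2*(‖z (k+2) - zstar‖ ^ 2 - ‖z (k+1) - zstar‖ ^ 2
          + ‖z (k+2) - z (k+1)‖ ^ 2) := by rw [F3]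
    have G4 := mul_le_mul_of_nonneg_left F4 (by positivity : (0:ℝ) ≤ 2*s*τ*σ)
    have G6 := mul_le_mul_of_nonneg_left habs (by positivity : (0:ℝ) ≤ 2*s*τ*σ*σ)
    have G5 := mul_le_mul_of_nonneg_left F5 (by positivity : (0:ℝ) ≤ q*τ*σ^2)
    have hw : (0:ℝ) ≤ (s-q)*τ*σ^2*‖z (k+2) - z (k+1)‖ ^ 2 := by
      have : (0:ℝ) ≤ s - q := by linarith
      positivity
    have young : 2*s*τ*σ*(ε (k+1) * ‖u (k+2) - ustar‖)
        ≤ s*τ*σ*α*‖u (k+2) - ustar‖ ^ 2 + (s*τ*σ/α)*(ε (k+1))^2 := by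
      have key : α * (2*(ε (k+1)) * ‖u (k+2) - ustar‖)
          ≤ α*(α*‖u (k+2) - ustar‖ ^ 2) + (ε (k+1))^2 := by
        nlinarith [sq_nonneg (α*‖u (k+2) - ustar‖ - ε (k+1))]
      have h2' := mul_le_mul_of_nonneg_left key (by positivity : (0:ℝ) ≤ s*τ*σ/α)
      calc 2*s*τ*σ*(ε (k+1) * ‖u (k+2) - ustar‖)
          = s*τ*σ/α * (α * (2*(ε (k+1)) * ‖u (k+2) - ustar‖)) := by
            field_simp
        _ ≤ s*τ*σ/α * (α*(α*‖u (k+2) - ustar‖ ^ 2) + (ε (k+1))^2) := h2'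
        _ = s*τ*σ*α*‖u (k+2) - ustar‖ ^ 2 + (s*τ*σ/α)*(ε (k+1))^2 := by
            field_simp
    have hfix : s^2*(s*τ*σ^2*‖u (k+2) - z (k+2)‖ ^ 2)
        = (2-τ)*(s*τ*σ^2*‖u (k+2) - z (k+2)‖ ^ 2) := by rw [hs2]
    simp only [hVdef]
    linarith [G1, G2, G3, G4, G5, G6, hw, young, hfix]
  -- telescoping
  have htel : ∀ n : ℕ, V (n+1) + ∑ i ∈ Finset.range n,
      (s*τ*σ*α*‖u (i+2) - ustar‖ ^ 2 + s^2*(s-q)*τ*σ^2*‖u (i+2) - z (i+2)‖ ^ 2)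
      ≤ V 1 + ∑ i ∈ Finset.range n, (s*τ*σ/α)*(ε (i+1))^2 := by
    intro n
    induction n with
    | zero => simp
    | succ n ih =>
      rw [Finset.sum_range_succ, Finset.sum_range_succ]
      have := hKey n
      have h22 : n+1+1 = n+2 := rfl
      rw [h22]
      linarith
  have hsq : Summable (fun k => (ε k)^2) := by
    refine Summable.of_nonneg_of_le (fun k => sq_nonneg _) (fun k => ?_)
      (hεsum.mul_left (∑' i, ε i))
    have hle := Summable.le_tsum hεsum k (fun j _ => hεpos j)
    nlinarith [hεpos k]
  have hsq' : Summable (fun i => (ε (i+1))^2) := (summable_nat_add_iff 1).2 hsq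
  have hTb : ∀ n, ∑ i ∈ Finset.range n, (s*τ*σ/α)*(ε (i+1))^2
      ≤ (s*τ*σ/α)*(∑' i, (ε (i+1))^2) := by
    intro n
    rw [← Finset.mul_sum]
    exact mul_le_mul_of_nonneg_left
      (Summable.sum_le_tsum _ (fun i _ => sq_nonneg _) hsq') (by positivity)
  have hbound : ∀ n, ∑ i ∈ Finset.range n,
      (s*τ*σ*α*‖u (i+2) - ustar‖ ^ 2 + s^2*(s-q)*τ*σ^2*‖u (i+2) - z (i+2)‖ ^ 2)
      ≤ V 1 + (s*τ*σ/α)*(∑' i, (ε (i+1))^2) := by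
    intro n
    have ha := htel n
    have hb := hV0 (n+1)
    have hc := hTb n
    exact le_trans (le_trans (le_add_of_nonneg_left hb) ha) (add_le_add le_rfl hc)
  have hsq' : (0:ℝ) ≤ s - q := by linarith
  have hsummable : Summable (fun i => s*τ*σ*α*‖u (i+2) - ustar‖ ^ 2
      + s^2*(s-q)*τ*σ^2*‖u (i+2) - z (i+2)‖ ^ 2) :=
    summable_of_sum_range_le (fun i => by positivity) hbound
  have hsm1 : Summable (fun i => s*τ*σ*α*‖u (i+2) - ustar‖ ^ 2) := by
    refine Summable.of_nonneg_of_le (fun i => by positivity) (fun i => ?_) hsummable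
    have : (0:ℝ) ≤ s^2*(s-q)*τ*σ^2*‖u (i+2) - z (i+2)‖ ^ 2 := by positivity
    linarith
  have hsm2 : Summable (fun i => s^2*(s-q)*τ*σ^2*‖u (i+2) - z (i+2)‖ ^ 2) := by
    refine Summable.of_nonneg_of_le (fun i => by positivity) (fun i => ?_) hsummable
    have : (0:ℝ) ≤ s*τ*σ*α*‖u (i+2) - ustar‖ ^ 2 := by positivity
    linarith
  -- convergence of u
  have hconv : ∀ (c : ℝ) (f : ℕ → H), 0 < c →
      Summable (fun i => c * ‖f (i+2)‖ ^ 2) →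
      Tendsto (fun n => ‖f n‖) atTop (𝓝 0) := by
    intro c f hc hsum
    have h0 := hsum.tendsto_atTop_zero
    have h1' : Tendsto (fun i => ‖f (i+2)‖ ^ 2) atTop (𝓝 0) := by
      have := h0.const_mul c⁻¹
      have heq : (fun i => c⁻¹ * (c * ‖f (i+2)‖ ^ 2)) = fun i => ‖f (i+2)‖ ^ 2 := by
        funext i; field_simp
      rw [heq] at this
      simpa using this
    have h2' : Tendsto (fun i => ‖f (i+2)‖) atTop (𝓝 0) := by
      have hcomp : Tendsto (fun i => Real.sqrt (‖f (i+2)‖ ^ 2)) atTop (𝓝 (Real.sqrt 0)) :=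
        (Real.continuous_sqrt.tendsto 0).comp h1'
      have heq : (fun i => Real.sqrt (‖f (i+2)‖ ^ 2)) = fun i => ‖f (i+2)‖ := by
        funext i; exact Real.sqrt_sq (norm_nonneg _)
      rw [heq, Real.sqrt_zero] at hcomp
      exact hcomp
    exact (tendsto_add_atTop_iff_nat 2).1 h2'
  have hu : Tendsto u atTop (𝓝 ustar) := by
    rw [tendsto_iff_norm_sub_tendsto_zero]
    exact hconv (s*τ*σ*α) (fun n => u n - ustar) (by positivity) hsm1
  have hdt : Tendsto (fun n => u n - z n) atTop (𝓝 (0:H)) := by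
    have hc : (0:ℝ) < s^2*(s-q)*τ*σ^2 := by
      have : 0 < s - q := by linarith
      positivity
    have := hconv (s^2*(s-q)*τ*σ^2) (fun n => u n - z n) hc hsm2
    exact tendsto_zero_iff_norm_tendsto_zero.2 this
  have hz : Tendsto z atTop (𝓝 zstar) := by
    have h := hu.sub hdt
    simp only [sub_sub_cancel, sub_zero] at h
    rwa [← hkkt2]
  -- convergence of lam
  have hu1 : Tendsto (fun n => u (n+1)) atTop (𝓝 ustar) := (tendsto_add_atTop_iff_nat 1).2 hu
  have hR : Tendsto (fun n => gradJ (u (n+1)) + lam n + σ • (u (n+1) - z n))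
      atTop (𝓝 (0:H)) := squeeze_zero_norm h1 hεsum.tendsto_atTop_zero
  have hSg : Tendsto (fun n => gradJ (u (n+1))) atTop (𝓝 (-lamstar)) := by
    have hc : Continuous fun v : H => (ContinuousLinearMap.adjoint S) (S v - g) + α • v := by
      fun_prop
    have h := (hc.tendsto ustar).comp hu1
    simp only [Function.comp_def] at h
    simp only [← hgrad] at h
    rwa [hstar] at h
  have hsd : Tendsto (fun n => σ • (u (n+1) - z n)) atTop (𝓝 (0:H)) := by
    have h := (hu1.sub hz).const_smul σ
    simpa [hkkt2] using h
  have hlam : Tendsto lam atTop (𝓝 lamstar) := by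
    have h := (hR.sub hSg).sub hsd
    have heq : (fun n => (gradJ (u (n+1)) + lam n + σ • (u (n+1) - z n))
        - gradJ (u (n+1)) - σ • (u (n+1) - z n)) = lam := by
      funext n; abel
    rw [heq] at h
    simpa using h
  exact ⟨hu, hz, hlam⟩
end
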